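/- Let λ⁽¹⁾, …, λ⁽ᵗ⁾ be partitions and T a semistandard Young tableau of shape λ⁽¹⁾ + ⋯ + λ⁽ᵗ⁾. Then there exist semistandard Young tableaux T₁, …, T_t of shapes λ⁽¹⁾, …, λ⁽ᵗ⁾ respectively, with content(T) = content(T₁) + ⋯ + content(T_t). -/

import Mathlib

/-- The content of a semistandard Young tableau: `content T v` is the number of cells whose
entry equals `v`. -/
def content {μ : YoungDiagram} (T : SemistandardYoungTableau μ) (v : ℕ) : ℕ :=
  (μ.cells.filter fun c => T c.1 c.2 = v).card

namespace SplitAux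

open Finset YoungDiagram

/-- Greedy split of an amount `D` into pieces bounded by capacities `d i`. -/
def ysplit (d : ℕ → ℕ) (D : ℕ) (i : ℕ) : ℕ :=
  min (d i) (D - ∑ k ∈ Finset.range i, d k)

lemma ysplit_sum (d : ℕ → ℕ) (D : ℕ) (n : ℕ) :
    ∑ i ∈ Finset.range n, ysplit d D i = min D (∑ i ∈ Finset.range n, d i) := by
  induction n with
  | zero => simp
  | succ n ih =>
    rw [Finset.sum_range_succ, Finset.sum_range_succ, ih, ysplit]
    omega

lemma ysplit_le (d : ℕ → ℕ) (D : ℕ) (i : ℕ) : ysplit d D i ≤ d i := min_le_left _ _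

/-- The subdiagram of `μ` with row lengths `g`. -/
def subdiag (μ : YoungDiagram) (g : ℕ → ℕ) (h1 : ∀ r, g r ≤ μ.rowLen r)
    (h2 : ∀ r, μ.rowLen (r + 1) ≤ g r) : YoungDiagram where
  cells := μ.cells.filter fun c => c.2 < g c.1
  isLowerSet := by
    rintro ⟨i2, j2⟩ ⟨i1, j1⟩ ⟨hi, hj⟩ hc
    simp only [Finset.coe_filter, Set.mem_setOf_eq, Finset.mem_coe, YoungDiagram.mem_cells] at hc ⊢
    obtain ⟨hmem, hlt⟩ := hc
    refine ⟨μ.up_left_mem hi hj hmem, lt_of_le_of_lt hj ?_⟩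
    rcases Nat.lt_or_ge i1 i2 with h | h
    · exact lt_of_lt_of_le hlt (le_trans (le_trans (h1 i2) (μ.rowLen_anti _ _ h)) (h2 i1))
    · have : i1 = i2 := le_antisymm hi h
      rw [this]; exact hlt

lemma mem_subdiag {μ : YoungDiagram} {g : ℕ → ℕ} {h1 h2} {i j : ℕ} :
    (i, j) ∈ subdiag μ g h1 h2 ↔ j < g i := by
  constructor
  · intro h
    replace h : (i, j) ∈ μ.cells.filter (fun c => c.2 < g c.1) := h
    simp only [Finset.mem_filter] at h
    exact h.2
  · intro h
    show (i, j) ∈ μ.cells.filter (fun c => c.2 < g c.1)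
    simp only [Finset.mem_filter, YoungDiagram.mem_cells]
    exact ⟨YoungDiagram.mem_iff_lt_rowLen.mpr (lt_of_lt_of_le h (h1 i)), h⟩

lemma rowLen_subdiag {μ : YoungDiagram} {g : ℕ → ℕ} {h1 h2} (r : ℕ) :
    (subdiag μ g h1 h2).rowLen r = g r := by
  have key : ∀ j, j < (subdiag μ g h1 h2).rowLen r ↔ j < g r := by
    intro j
    rw [← YoungDiagram.mem_iff_lt_rowLen, mem_subdiag]
  have := key ((subdiag μ g h1 h2).rowLen r)
  have := key (g r)
  omega

lemma cells_subdiag {μ : YoungDiagram} {g : ℕ → ℕ} {h1 h2} :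
    (subdiag μ g h1 h2).cells = μ.cells.filter fun c => c.2 < g c.1 := rfl

/-- Restriction of a SSYT to a subdiagram. -/
def restrictSSYT {ν : YoungDiagram} (T : SemistandardYoungTableau ν) (ν' : YoungDiagram)
    (hsub : ∀ c : ℕ × ℕ, c ∈ ν' → c ∈ ν) : SemistandardYoungTableau ν' where
  entry i j := if (i, j) ∈ ν' then T i j else 0
  row_weak' := by
    intro i j1 j2 hj hcell
    have h1 : (i, j1) ∈ ν' := ν'.up_left_mem le_rfl hj.le hcell
    rw [if_pos h1, if_pos hcell]
    exact T.row_weak hj (hsub _ hcell)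
  col_strict' := by
    intro i1 i2 j hi hcell
    have h1 : (i1, j) ∈ ν' := ν'.up_left_mem hi.le le_rfl hcell
    rw [if_pos h1, if_pos hcell]
    exact T.col_strict hi (hsub _ hcell)
  zeros' := by intro i j h; rw [if_neg h]

lemma restrict_entry {ν : YoungDiagram} (T : SemistandardYoungTableau ν) (ν' : YoungDiagram)
    (hsub) {i j : ℕ} (h : (i, j) ∈ ν') : restrictSSYT T ν' hsub i j = T i j := by
  show (if (i, j) ∈ ν' then T i j else 0) = T i j
  rw [if_pos h]

/-- Extension of a SSYT on a subdiagram `lt ⊆ μ` (with `μ/lt` a horizontal strip)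
by the value `N` on the strip, where all entries of `S` are `< N`. -/
def extendSSYT (μ lt : YoungDiagram) (hsub : ∀ c : ℕ × ℕ, c ∈ lt → c ∈ μ)
    (hstrip : ∀ r, μ.rowLen (r + 1) ≤ lt.rowLen r)
    (S : SemistandardYoungTableau lt) (N : ℕ)
    (hS : ∀ i j, (i, j) ∈ lt → S i j < N) : SemistandardYoungTableau μ where
  entry i j := if (i, j) ∈ lt then S i j else if (i, j) ∈ μ then N else 0
  row_weak' := by
    intro i j1 j2 hj hcell
    by_cases h2 : (i, j2) ∈ lt
    · have h1 : (i, j1) ∈ lt := lt.up_left_mem le_rfl hj.le h2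
      rw [if_pos h1, if_pos h2]
      exact S.row_weak hj h2
    · rw [if_neg h2, if_pos hcell]
      by_cases h1 : (i, j1) ∈ lt
      · rw [if_pos h1]; exact (hS _ _ h1).le
      · rw [if_neg h1, if_pos (μ.up_left_mem le_rfl hj.le hcell)]
  col_strict' := by
    intro i1 i2 j hi hcell
    by_cases h2 : (i2, j) ∈ lt
    · have h1 : (i1, j) ∈ lt := lt.up_left_mem hi.le le_rfl h2
      rw [if_pos h1, if_pos h2]
      exact S.col_strict hi h2
    · rw [if_neg h2, if_pos hcell]
      have h1 : (i1, j) ∈ lt := by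
        rw [YoungDiagram.mem_iff_lt_rowLen]
        have hj2 : j < μ.rowLen i2 := YoungDiagram.mem_iff_lt_rowLen.mp hcell
        calc j < μ.rowLen i2 := hj2
          _ ≤ μ.rowLen (i1 + 1) := μ.rowLen_anti _ _ hi
          _ ≤ lt.rowLen i1 := hstrip i1
      rw [if_pos h1]
      exact hS _ _ h1
  zeros' := by
    intro i j h
    rw [if_neg (fun hc => h (hsub _ hc)), if_neg h]

lemma extend_entry_mem (μ lt : YoungDiagram) (hsub hstrip S N hS) {i j : ℕ}
    (h : (i, j) ∈ lt) : extendSSYT μ lt hsub hstrip S N hS i j = S i j := by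
  show (if (i, j) ∈ lt then S i j else _) = S i j
  rw [if_pos h]

lemma extend_entry_strip (μ lt : YoungDiagram) (hsub hstrip S N hS) {i j : ℕ}
    (h : (i, j) ∉ lt) (h2 : (i, j) ∈ μ) :
    extendSSYT μ lt hsub hstrip S N hS i j = N := by
  show (if (i, j) ∈ lt then S i j else if (i, j) ∈ μ then N else 0) = N
  rw [if_neg h, if_pos h2]

lemma content_extend_ne (μ lt : YoungDiagram) (hsub hstrip S N hS) {v : ℕ} (hv : v ≠ N) :
    content (extendSSYT μ lt hsub hstrip S N hS) v = content S v := by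
  unfold content
  congr 1
  ext ⟨i, j⟩
  simp only [Finset.mem_filter, YoungDiagram.mem_cells]
  constructor
  · rintro ⟨hmem, heq⟩
    by_cases h : (i, j) ∈ lt
    · rw [extend_entry_mem μ lt hsub hstrip S N hS h] at heq
      exact ⟨h, heq⟩
    · rw [extend_entry_strip μ lt hsub hstrip S N hS h hmem] at heq
      exact absurd heq.symm hv
  · rintro ⟨hmem, heq⟩
    rw [extend_entry_mem μ lt hsub hstrip S N hS hmem] at *
    exact ⟨hsub _ hmem, heq⟩

lemma content_extend_top (μ lt : YoungDiagram) (hsub hstrip S N hS) :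
    content (extendSSYT μ lt hsub hstrip S N hS) N = μ.cells.card - lt.cells.card := by
  unfold content
  have h1 : μ.cells.filter (fun c => extendSSYT μ lt hsub hstrip S N hS c.1 c.2 = N)
      = μ.cells.filter (fun c => ¬ ((c.1, c.2) ∈ lt)) := by
    apply Finset.filter_congr
    rintro ⟨i, j⟩ hmem
    rw [YoungDiagram.mem_cells] at hmem
    by_cases h : (i, j) ∈ lt
    · rw [extend_entry_mem μ lt hsub hstrip S N hS h]
      simp only [h, not_true, iff_false]
      exact Nat.ne_of_lt (hS _ _ h)
    · rw [extend_entry_strip μ lt hsub hstrip S N hS h hmem]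
      simp [h]
  have h2 : μ.cells.filter (fun c => (c.1, c.2) ∈ lt) = lt.cells := by
    ext ⟨i, j⟩
    simp only [Finset.mem_filter, YoungDiagram.mem_cells]
    exact ⟨fun h => h.2, fun h => ⟨hsub _ h, h⟩⟩
  have h3 := Finset.card_filter_add_card_filter_not
    (s := μ.cells) (p := fun c : ℕ × ℕ => (c.1, c.2) ∈ lt)
  rw [h1]
  rw [h2] at h3
  omega

lemma card_eq_sum_rowLens (μ : YoungDiagram) (n : ℕ) (h : ∀ r, n ≤ r → μ.rowLen r = 0) :
    μ.cells.card = ∑ r ∈ Finset.range n, μ.rowLen r := by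
  rw [Finset.card_eq_sum_card_fiberwise (f := Prod.fst) (t := Finset.range n)]
  · apply Finset.sum_congr rfl
    intro r _
    rw [YoungDiagram.rowLen_eq_card]
    congr 1
  · rintro ⟨i, j⟩ hc
    rw [Finset.mem_coe, YoungDiagram.mem_cells] at hc
    rw [Finset.mem_coe, Finset.mem_range]
    by_contra hn
    have := h i (le_of_not_gt hn)
    have := YoungDiagram.mem_iff_lt_rowLen.mp hc
    omega

end SplitAux

open SplitAux Finset in
lemma split_aux (N : ℕ) : ∀ (t : ℕ) (lam : Fin t → YoungDiagram) (nu : YoungDiagram)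
    (_ : ∀ r : ℕ, nu.rowLen r = ∑ j, (lam j).rowLen r)
    (T : SemistandardYoungTableau nu)
    (_ : ∀ i j, (i, j) ∈ nu → T i j < N),
    ∃ Ts : (j : Fin t) → SemistandardYoungTableau (lam j),
      ∀ v : ℕ, content T v = ∑ j, content (Ts j) v := by
  induction N with
  | zero =>
    intro t lam nu hsum T hbound
    have hnu : ∀ c : ℕ × ℕ, c ∉ nu := fun c hc => by
      have := hbound c.1 c.2 hc; omega
    have hlam : ∀ j : Fin t, ∀ c : ℕ × ℕ, c ∉ lam j := by
      rintro j ⟨i, k⟩ hc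
      have h1 : k < (lam j).rowLen i := YoungDiagram.mem_iff_lt_rowLen.mp hc
      have h2 : (lam j).rowLen i ≤ nu.rowLen i := by
        rw [hsum i]
        exact Finset.single_le_sum (f := fun j => (lam j).rowLen i) (fun _ _ => Nat.zero_le _)
          (Finset.mem_univ j)
      have h3 : (i, k) ∈ nu := YoungDiagram.mem_iff_lt_rowLen.mpr (by omega)
      exact hnu _ h3
    refine ⟨fun j => ⟨fun _ _ => 0, ?_, ?_, ?_⟩, ?_⟩
    · intro i j1 j2 _ hc; exact absurd hc (hlam _ _)
    · intro i1 i2 j _ hc; exact absurd hc (hlam _ _)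
    · intro _ _ _; rfl
    · intro v
      have : content T v = 0 := by
        unfold content
        rw [Finset.card_eq_zero, Finset.filter_eq_empty_iff]
        intro c hc
        exact absurd (YoungDiagram.mem_cells _ |>.mp hc) (hnu c)
      rw [this]
      symm
      apply Finset.sum_eq_zero
      intro j _
      unfold content
      rw [Finset.card_eq_zero, Finset.filter_eq_empty_iff]
      intro c hc
      exact absurd (YoungDiagram.mem_cells _ |>.mp hc) (hlam j c)
  | succ N IH =>
    intro t lam nu hsum T hbound
    -- the subdiagram of cells with entry < N
    have hmono : ∀ i1 j1 i2 j2 : ℕ, i1 ≤ i2 → j1 ≤ j2 → (i2, j2) ∈ nu → T i1 j1 ≤ T i2 j2 := by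
      intro i1 j1 i2 j2 hi hj hc
      calc T i1 j1 ≤ T i2 j1 := T.col_weak hi (nu.up_left_mem le_rfl hj hc)
        _ ≤ T i2 j2 := T.row_weak_of_le hj hc
    obtain ⟨nt, hntcells⟩ : ∃ nt : YoungDiagram,
        nt.cells = nu.cells.filter fun c => T c.1 c.2 < N := by
      refine ⟨⟨nu.cells.filter fun c => T c.1 c.2 < N, ?_⟩, rfl⟩
      rintro ⟨i2, j2⟩ ⟨i1, j1⟩ ⟨hi, hj⟩ hc
      simp only [Finset.coe_filter, Set.mem_setOf_eq, Finset.mem_coe,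
        YoungDiagram.mem_cells] at hc ⊢
      exact ⟨nu.up_left_mem hi hj hc.1, lt_of_le_of_lt (hmono _ _ _ _ hi hj hc.1) hc.2⟩
    have mem_nt : ∀ i j : ℕ, ((i, j) ∈ nt ↔ (i, j) ∈ nu ∧ T i j < N) := by
      intro i j
      rw [← YoungDiagram.mem_cells, hntcells, Finset.mem_filter]
      simp
    have hsubnt : ∀ c : ℕ × ℕ, c ∈ nt → c ∈ nu := by
      rintro ⟨i, j⟩ h; exact ((mem_nt i j).mp h).1
    have hntlen_le : ∀ r, nt.rowLen r ≤ nu.rowLen r := by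
      intro r
      rcases Nat.eq_zero_or_pos (nt.rowLen r) with h | h
      · omega
      · have h1 : (r, nt.rowLen r - 1) ∈ nt := YoungDiagram.mem_iff_lt_rowLen.mpr (by omega)
        have := YoungDiagram.mem_iff_lt_rowLen.mp (hsubnt _ h1)
        omega
    have hntstrip : ∀ r, nu.rowLen (r + 1) ≤ nt.rowLen r := by
      intro r
      rcases Nat.eq_zero_or_pos (nu.rowLen (r + 1)) with h | h
      · omega
      · have hmem : (r + 1, nu.rowLen (r + 1) - 1) ∈ nu :=
          YoungDiagram.mem_iff_lt_rowLen.mpr (by omega)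
        have h1 : (r, nu.rowLen (r + 1) - 1) ∈ nu := nu.up_left_mem (Nat.le_succ r) le_rfl hmem
        have h2 := T.col_strict (lt_add_one r) hmem
        have h3 := hbound _ _ hmem
        have h4 : (r, nu.rowLen (r + 1) - 1) ∈ nt := (mem_nt _ _).mpr ⟨h1, by omega⟩
        have := YoungDiagram.mem_iff_lt_rowLen.mp h4
        omega
    -- split each row of nt among the lam j's
    set dd : ℕ → ℕ → ℕ := fun r i =>
      if h : i < t then (lam ⟨i, h⟩).rowLen r - (lam ⟨i, h⟩).rowLen (r + 1) else 0 with hdd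
    set Dv : ℕ → ℕ := fun r => nt.rowLen r - nu.rowLen (r + 1) with hDv
    set g : Fin t → ℕ → ℕ :=
      fun j r => (lam j).rowLen (r + 1) + ysplit (dd r) (Dv r) j.val with hg
    have hdd_apply : ∀ (r : ℕ) (j : Fin t),
        dd r j.val = (lam j).rowLen r - (lam j).rowLen (r + 1) := by
      intro r j
      simp [hdd, j.isLt]
    have hdd_sum : ∀ r, ∑ i ∈ Finset.range t, dd r i
        = ∑ j : Fin t, ((lam j).rowLen r - (lam j).rowLen (r + 1)) := by
      intro r
      rw [← Fin.sum_univ_eq_sum_range (fun i => dd r i) t]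
      exact Finset.sum_congr rfl fun j _ => hdd_apply r j
    have hDle : ∀ r, Dv r ≤ ∑ i ∈ Finset.range t, dd r i := by
      intro r
      rw [hdd_sum r, Finset.sum_tsub_distrib _
        (fun j _ => (lam j).rowLen_anti r (r + 1) (Nat.le_succ r)), ← hsum, ← hsum]
      have h1 := hntlen_le r
      have h2 : Dv r = nt.rowLen r - nu.rowLen (r + 1) := rfl
      omega
    have hg_sum : ∀ r, ∑ j : Fin t, g j r = nt.rowLen r := by
      intro r
      have h0 : ∀ j : Fin t, g j r = (lam j).rowLen (r + 1) + ysplit (dd r) (Dv r) j.val :=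
        fun j => rfl
      rw [Finset.sum_congr rfl fun j _ => h0 j, Finset.sum_add_distrib,
        Fin.sum_univ_eq_sum_range (fun i => ysplit (dd r) (Dv r) i) t, ysplit_sum,
        ← hsum (r + 1)]
      have h1 := hDle r
      have h2 : Dv r = nt.rowLen r - nu.rowLen (r + 1) := rfl
      have h3 := hntstrip r
      omega
    have hg_le : ∀ (j : Fin t) (r : ℕ), g j r ≤ (lam j).rowLen r := by
      intro j r
      have h1 := ysplit_le (dd r) (Dv r) j.val
      have h2 := hdd_apply r j
      have h3 := (lam j).rowLen_anti r (r + 1) (Nat.le_succ r)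
      have h4 : g j r = (lam j).rowLen (r + 1) + ysplit (dd r) (Dv r) j.val := rfl
      omega
    have hg_ge : ∀ (j : Fin t) (r : ℕ), (lam j).rowLen (r + 1) ≤ g j r :=
      fun j r => Nat.le_add_right _ _
    -- the subdiagrams
    set lt : Fin t → YoungDiagram := fun j => subdiag (lam j) (g j) (hg_le j) (hg_ge j) with hlt
    have hlt_rowLen : ∀ (j : Fin t) (r : ℕ), (lt j).rowLen r = g j r := fun j r =>
      rowLen_subdiag r
    have hsub_lt : ∀ (j : Fin t), ∀ c : ℕ × ℕ, c ∈ lt j → c ∈ lam j := by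
      rintro j ⟨i, k⟩ h
      rw [← YoungDiagram.mem_cells, cells_subdiag, Finset.mem_filter] at h
      exact h.1
    have hstrip_lt : ∀ (j : Fin t) (r : ℕ), (lam j).rowLen (r + 1) ≤ (lt j).rowLen r := by
      intro j r
      rw [hlt_rowLen]
      exact hg_ge j r
    have hsum' : ∀ r, nt.rowLen r = ∑ j, (lt j).rowLen r := by
      intro r
      rw [Finset.sum_congr rfl fun j _ => hlt_rowLen j r, hg_sum]
    -- restrict T to nt and apply IH
    have hbound' : ∀ i j : ℕ, (i, j) ∈ nt → restrictSSYT T nt hsubnt i j < N := by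
      intro i j h
      rw [restrict_entry T nt hsubnt h]
      exact ((mem_nt i j).mp h).2
    obtain ⟨Ss, hSs⟩ := IH t lt nt hsum' (restrictSSYT T nt hsubnt) hbound'
    have hcontSt : ∀ v, N ≤ v → content (restrictSSYT T nt hsubnt) v = 0 := by
      intro v hv
      unfold content
      rw [Finset.card_eq_zero, Finset.filter_eq_empty_iff]
      rintro ⟨i, k⟩ hc
      rw [YoungDiagram.mem_cells] at hc
      rw [restrict_entry T nt hsubnt hc]
      have := ((mem_nt i k).mp hc).2
      omega
    have hS_lt : ∀ (j : Fin t) (i k : ℕ), (i, k) ∈ lt j → Ss j i k < N := by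
      intro j i k hmem
      by_contra hge
      push_neg at hge
      have h0 : content (Ss j) (Ss j i k) ≠ 0 := by
        unfold content
        exact Finset.card_ne_zero_of_mem
          (Finset.mem_filter.mpr ⟨(YoungDiagram.mem_cells _).mpr hmem, rfl⟩)
      have h1 := hSs (Ss j i k)
      rw [hcontSt _ hge] at h1
      exact h0 (Finset.sum_eq_zero_iff.mp h1.symm j (Finset.mem_univ j))
    -- extend each Ss j to lam j by the value N
    refine ⟨fun j => extendSSYT (lam j) (lt j) (hsub_lt j) (hstrip_lt j) (Ss j) N (hS_lt j), ?_⟩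
    intro v
    by_cases hv : v = N
    · rw [hv]
      have hcardT : content T N = nu.cells.card - nt.cells.card := by
        unfold content
        have h1 : nu.cells.filter (fun c => T c.1 c.2 = N)
            = nu.cells.filter (fun c : ℕ × ℕ => ¬ (T c.1 c.2 < N)) := by
          apply Finset.filter_congr
          rintro ⟨i, k⟩ hmem
          rw [YoungDiagram.mem_cells] at hmem
          have := hbound i k hmem
          dsimp only
          omega
        have h3 := Finset.card_filter_add_card_filter_not
          (s := nu.cells) (p := fun c : ℕ × ℕ => T c.1 c.2 < N)
        rw [h1, ← hntcells] at *
        omega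
      have hzero : ∀ r, nu.colLen 0 ≤ r → nu.rowLen r = 0 := by
        intro r hr
        by_contra h
        have h1 : (r, 0) ∈ nu := YoungDiagram.mem_iff_lt_rowLen.mpr (by omega)
        have := YoungDiagram.mem_iff_lt_colLen.mp h1
        omega
      have hzlam : ∀ (j : Fin t) (r : ℕ), nu.colLen 0 ≤ r → (lam j).rowLen r = 0 := by
        intro j r hr
        have h2 : (lam j).rowLen r ≤ nu.rowLen r := by
          rw [hsum r]
          exact Finset.single_le_sum (f := fun j => (lam j).rowLen r)
            (fun _ _ => Nat.zero_le _) (Finset.mem_univ j)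
        have := hzero r hr
        omega
      have hzlt : ∀ (j : Fin t) (r : ℕ), nu.colLen 0 ≤ r → (lt j).rowLen r = 0 := by
        intro j r hr
        have h1 := hg_le j r
        have := hzlam j r hr
        rw [hlt_rowLen]
        omega
      have hznt : ∀ r, nu.colLen 0 ≤ r → nt.rowLen r = 0 := by
        intro r hr
        have := hntlen_le r
        have := hzero r hr
        omega
      have c1 := card_eq_sum_rowLens nu (nu.colLen 0) hzero
      have c2 := card_eq_sum_rowLens nt (nu.colLen 0) hznt
      have c3 : ∀ j : Fin t, (lam j).cells.card
          = ∑ r ∈ Finset.range (nu.colLen 0), (lam j).rowLen r :=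
        fun j => card_eq_sum_rowLens (lam j) (nu.colLen 0) (hzlam j)
      have c4 : ∀ j : Fin t, (lt j).cells.card
          = ∑ r ∈ Finset.range (nu.colLen 0), (lt j).rowLen r :=
        fun j => card_eq_sum_rowLens (lt j) (nu.colLen 0) (hzlt j)
      have e1 : ∑ j : Fin t, (lam j).cells.card = nu.cells.card := by
        rw [c1, Finset.sum_congr rfl fun j _ => c3 j, Finset.sum_comm]
        exact Finset.sum_congr rfl fun r _ => (hsum r).symm
      have e2 : ∑ j : Fin t, (lt j).cells.card = nt.cells.card := by
        rw [c2, Finset.sum_congr rfl fun j _ => c4 j, Finset.sum_comm]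
        exact Finset.sum_congr rfl fun r _ => (hsum' r).symm
      have hle : ∀ j : Fin t, (lt j).cells.card ≤ (lam j).cells.card := by
        intro j
        apply Finset.card_le_card
        intro c hc
        rw [YoungDiagram.mem_cells] at *
        exact hsub_lt j c hc
      have hsum_sub : ∑ j : Fin t, ((lam j).cells.card - (lt j).cells.card)
          = nu.cells.card - nt.cells.card := by
        rw [Finset.sum_tsub_distrib _ (fun j _ => hle j), e1, e2]
      rw [hcardT, ← hsum_sub]
      exact Finset.sum_congr rfl fun j _ =>
        (content_extend_top (lam j) (lt j) (hsub_lt j) (hstrip_lt j) (Ss j) N (hS_lt j)).symm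
    · have hTv : content T v = content (restrictSSYT T nt hsubnt) v := by
        unfold content
        congr 1
        ext ⟨i, k⟩
        simp only [Finset.mem_filter, YoungDiagram.mem_cells]
        constructor
        · rintro ⟨hmem, heq⟩
          have hb := hbound i k hmem
          have hm : (i, k) ∈ nt := (mem_nt i k).mpr ⟨hmem, by omega⟩
          exact ⟨hm, by rw [restrict_entry T nt hsubnt hm]; exact heq⟩
        · rintro ⟨hmem, heq⟩
          rw [restrict_entry T nt hsubnt hmem] at heq
          exact ⟨hsubnt _ hmem, heq⟩
      rw [hTv, hSs v]
      exact Finset.sum_congr rfl fun j _ =>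
        (content_extend_ne (lam j) (lt j) (hsub_lt j) (hstrip_lt j) (Ss j) N (hS_lt j) hv).symm

theorem stmt_12 (t : ℕ) (lam : Fin t → YoungDiagram) (nu : YoungDiagram)
    (hsum : ∀ r : ℕ, nu.rowLen r = ∑ j, (lam j).rowLen r)
    (T : SemistandardYoungTableau nu) :
    ∃ Ts : (j : Fin t) → SemistandardYoungTableau (lam j),
      ∀ v : ℕ, content T v = ∑ j, content (Ts j) v := by
  apply split_aux ((nu.cells.sup fun c => T c.1 c.2) + 1) t lam nu hsum T
  intro i j h
  have : T i j ≤ nu.cells.sup fun c => T c.1 c.2 :=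
    Finset.le_sup (f := fun c : ℕ × ℕ => T c.1 c.2) (YoungDiagram.mem_cells (i, j) |>.mpr h)
  omega
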